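/- arXiv:1303.2794 — 7 statements merged into one kernel-verified Lean document; each statement's English description precedes it below -/
import Mathlib

section
/- For 0 < q < 1, real numbers r' > r > 0, and integers l ≥ 0, m ≥ 0: ∑_{k=0}^{l} C(l,k)(r/r')^k(1-r/r')^{l-k} · q^k · k^{↓m} = (qr/(q'r'))^m · (q')^l · l^{↓m}, where q' := 1 - (1-q)·r/r'. -/
/-- Falling factorial `x^{↓m} = x(x-1)⋯(x-m+1)`. -/
noncomputable def ffall (x : ℝ) (m : ℕ) : ℝ := ∏ i ∈ Finset.range m, (x - i)

lemma ffall_nat (k m : ℕ) : ffall (k : ℝ) m = (k.descFactorial m : ℝ) := by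
  induction m with
  | zero => simp [ffall]
  | succ m ih =>
    rw [ffall, Finset.prod_range_succ, ← ffall, ih, Nat.descFactorial_succ]
    rcases le_or_gt m k with h | h
    · push_cast [h]; ring
    · rw [Nat.descFactorial_eq_zero_iff_lt.mpr h]
      simp

lemma choose_mul_descFactorial {l k m : ℕ} (hkl : k ≤ l) (hmk : m ≤ k) :
    l.choose k * k.descFactorial m = l.descFactorial m * (l - m).choose (k - m) := by
  rw [Nat.descFactorial_eq_factorial_mul_choose, Nat.descFactorial_eq_factorial_mul_choose,
    ← Nat.mul_assoc, Nat.mul_comm (l.choose k) (Nat.factorial m), Nat.mul_assoc, Nat.mul_assoc,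
    Nat.choose_mul hmk]

/-- The binomial link applied to `q^k k^{↓m}`. -/
theorem binomial_link_geometric_falling_factorial (q : ℝ) (hq0 : 0 < q) (hq1 : q < 1)
    (r r' : ℝ) (hr : 0 < r) (hrr' : r < r') (l m : ℕ) :
    ∑ k ∈ Finset.range (l + 1),
        (l.choose k : ℝ) * (r / r') ^ k * (1 - r / r') ^ (l - k) * (q ^ k * ffall k m)
      = (q * r / ((1 - (1 - q) * (r / r')) * r')) ^ m
          * (1 - (1 - q) * (r / r')) ^ l * ffall l m := by
  have hr' : (0:ℝ) < r' := hr.trans hrr'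
  set p : ℝ := r / r' with hp
  have hp0 : 0 < p := div_pos hr hr'
  have hp1 : p < 1 := (div_lt_one hr').mpr hrr'
  set Q : ℝ := 1 - (1 - q) * p with hQ
  have hQpos : 0 < Q := by
    have : (1 - q) * p < 1 * 1 := by
      apply mul_lt_mul' (by linarith) hp1 hp0.le one_pos
    simpa [hQ] using by linarith
  have hQne : Q ≠ 0 := hQpos.ne'
  have hqr : q * r / (Q * r') = q * p / Q := by
    rw [hp, mul_comm Q r', ← div_div, mul_div_assoc]
  rw [hqr]
  rcases lt_or_ge l m with hlm | hml
  · -- m > l : both sides vanish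
    have hRHS : ffall (l : ℝ) m = 0 := by
      rw [ffall_nat, Nat.descFactorial_eq_zero_iff_lt.mpr hlm, Nat.cast_zero]
    rw [hRHS, mul_zero]
    apply Finset.sum_eq_zero
    intro k hk
    have hkl : k < m := lt_of_lt_of_le (Finset.mem_range.mp hk) hlm
    rw [ffall_nat, Nat.descFactorial_eq_zero_iff_lt.mpr hkl]
    simp
  · -- m ≤ l
    have key : ∀ k ∈ Finset.range (l + 1),
        (l.choose k : ℝ) * p ^ k * (1 - p) ^ (l - k) * (q ^ k * ffall k m)
        = (l.choose k : ℝ) * (k.descFactorial m : ℝ) * (q * p) ^ k * (1 - p) ^ (l - k) := by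
      intro k _
      rw [ffall_nat, mul_pow]
      ring
    rw [Finset.sum_congr rfl key]
    have hsplit : Finset.range (l + 1) = Finset.Ico 0 m ∪ Finset.Ico m (l + 1) := by
      rw [Finset.range_eq_Ico, Finset.Ico_union_Ico_eq_Ico (Nat.zero_le m) (by omega)]
    rw [hsplit, Finset.sum_union (by
      apply Finset.Ico_disjoint_Ico_consecutive)]
    have h1 : ∑ k ∈ Finset.Ico 0 m,
        (l.choose k : ℝ) * (k.descFactorial m : ℝ) * (q * p) ^ k * (1 - p) ^ (l - k) = 0 := by
      apply Finset.sum_eq_zero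
      intro k hk
      rw [Nat.descFactorial_eq_zero_iff_lt.mpr (Finset.mem_Ico.mp hk).2]
      simp
    rw [h1, zero_add, Finset.sum_Ico_eq_sum_range]
    have hlen : l + 1 - m = (l - m) + 1 := by omega
    rw [hlen]
    have h2 : ∀ j ∈ Finset.range ((l - m) + 1),
        (l.choose (m + j) : ℝ) * ((m + j).descFactorial m : ℝ) * (q * p) ^ (m + j)
            * (1 - p) ^ (l - (m + j))
        = (l.descFactorial m : ℝ) * (q * p) ^ m *
            (((l - m).choose j : ℝ) * (q * p) ^ j * (1 - p) ^ ((l - m) - j)) := by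
      intro j hj
      have hjle : j ≤ l - m := Nat.lt_succ_iff.mp (Finset.mem_range.mp hj)
      have hmjl : m + j ≤ l := by omega
      have hid := choose_mul_descFactorial (l := l) (k := m + j) (m := m) hmjl (Nat.le_add_right m j)
      have hidR : (l.choose (m + j) : ℝ) * ((m + j).descFactorial m : ℝ)
          = (l.descFactorial m : ℝ) * ((l - m).choose ((m + j) - m) : ℝ) := by
        exact_mod_cast congrArg (Nat.cast : ℕ → ℝ) hid
      rw [hidR]
      have : (m + j) - m = j := by omega
      rw [this]
      have : l - (m + j) = (l - m) - j := by omega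
      rw [this, pow_add]
      ring
    rw [Finset.sum_congr rfl h2, ← Finset.mul_sum]
    have hbin : ∑ j ∈ Finset.range ((l - m) + 1),
        ((l - m).choose j : ℝ) * (q * p) ^ j * (1 - p) ^ ((l - m) - j)
        = (q * p + (1 - p)) ^ (l - m) := by
      rw [add_pow]
      apply Finset.sum_congr rfl
      intro j _
      ring
    rw [hbin]
    have hQ' : q * p + (1 - p) = Q := by rw [hQ]; ring
    rw [hQ', ffall_nat]
    have hQpow : Q ^ l = Q ^ m * Q ^ (l - m) := by
      rw [← pow_add]
      congr 1
      omega
    rw [div_pow, hQpow, mul_pow]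
    field_simp
end

section
/- For any r' > r > 0 and any integer n ≥ 0, the binomial link maps Meixner polynomials to Meixner polynomials: ∑_{k=0}^l C(l,k)(r/r')^k(1-r/r')^{l-k} · Meix_n(k; c, r) = (r/r')^n · Meix_n(l; c, r') for all l ∈ ℤ_+. -/
/-- Pochhammer symbol `(c)_m = c(c+1)⋯(c+m-1)`. -/
noncomputable def poch (c : ℝ) (m : ℕ) : ℝ := ∏ i ∈ Finset.range m, (c + i)

/-- The monic Meixner polynomial. -/
noncomputable def Meix (c r : ℝ) (n : ℕ) (x : ℝ) : ℝ :=
  poch c n * ∑ m ∈ Finset.range (n + 1),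
    (-r) ^ (n - m) * ffall n m / (poch c m * m.factorial) * ffall x m

lemma binom_ffall (p : ℝ) (l m : ℕ) :
    ∑ k ∈ Finset.range (l + 1),
      (l.choose k : ℝ) * p ^ k * (1 - p) ^ (l - k) * ffall (k : ℝ) m
      = p ^ m * ffall (l : ℝ) m := by
  rcases le_or_gt m l with hml | hml
  · have hsub : Finset.Ico m (l + 1) ⊆ Finset.range (l + 1) := by
      rw [Finset.range_eq_Ico]
      exact Finset.Ico_subset_Ico (Nat.zero_le m) le_rfl
    rw [← Finset.sum_subset hsub (fun k hk hk' => ?_)]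
    · rw [Finset.sum_Ico_eq_sum_range]
      have hlen : l + 1 - m = (l - m) + 1 := by omega
      rw [hlen]
      have step : ∀ j ∈ Finset.range (l - m + 1),
          (l.choose (m + j) : ℝ) * p ^ (m + j) * (1 - p) ^ (l - (m + j)) *
              ffall ((m + j : ℕ) : ℝ) m
          = ((l.choose m : ℝ) * m.factorial * p ^ m) *
              (((l - m).choose j : ℝ) * p ^ j * (1 - p) ^ (l - m - j)) := by
        intro j hj
        rw [Finset.mem_range] at hj
        have h1 : m + j ≤ l := by omega
        have hcc : l.choose (m + j) * ((m + j).choose m) =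
            l.choose m * (l - m).choose j := by
          have := Nat.choose_mul (n := l) (Nat.le_add_right m j)
          simpa using this
        have hccR : (l.choose (m + j) : ℝ) * ((m + j).choose m : ℝ) =
            (l.choose m : ℝ) * ((l - m).choose j : ℝ) := by exact_mod_cast hcc
        rw [ffall_nat, Nat.descFactorial_eq_factorial_mul_choose]
        have h2 : l - (m + j) = l - m - j := by omega
        rw [h2, pow_add]
        push_cast
        linear_combination ((m.factorial : ℝ) * p ^ m * p ^ j * (1 - p) ^ (l - m - j)) * hccR
      rw [Finset.sum_congr rfl step, ← Finset.mul_sum]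
      have hsum : ∑ j ∈ Finset.range (l - m + 1),
          ((l - m).choose j : ℝ) * p ^ j * (1 - p) ^ (l - m - j) = 1 := by
        have := add_pow p (1 - p) (l - m)
        have h1 : (p + (1 - p)) = 1 := by ring
        rw [h1, one_pow] at this
        refine Eq.trans (Finset.sum_congr rfl fun j _ => ?_) this.symm
        ring
      rw [hsum, mul_one, ffall_nat, Nat.descFactorial_eq_factorial_mul_choose]
      push_cast
      ring
    · rw [Finset.mem_range] at hk
      rw [Finset.mem_Ico, not_and] at hk'
      have hkm : k < m := by
        by_contra h
        push_neg at h
        exact hk' h hk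
      rw [ffall_nat, Nat.descFactorial_eq_zero_iff_lt.mpr hkm, Nat.cast_zero, mul_zero]
  · have h0 : ffall (l : ℝ) m = 0 := by
      rw [ffall_nat, Nat.descFactorial_eq_zero_iff_lt.mpr hml, Nat.cast_zero]
    rw [h0, mul_zero]
    refine Finset.sum_eq_zero fun k hk => ?_
    rw [Finset.mem_range] at hk
    have : ffall (k : ℝ) m = 0 := by
      rw [ffall_nat, Nat.descFactorial_eq_zero_iff_lt.mpr
        (lt_of_le_of_lt (Nat.le_of_lt_succ hk) hml), Nat.cast_zero]
    rw [this, mul_zero]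

/-- The binomial link maps Meixner polynomials to Meixner polynomials. -/
theorem binomial_link_meixner (c : ℝ) (hc : 0 < c) (r r' : ℝ) (hr : 0 < r)
    (hrr' : r < r') (n : ℕ) (l : ℕ) :
    ∑ k ∈ Finset.range (l + 1),
        (l.choose k : ℝ) * (r / r') ^ k * (1 - r / r') ^ (l - k) * Meix c r n k
      = (r / r') ^ n * Meix c r' n l := by
  set p : ℝ := r / r' with hp
  have hr' : r' ≠ 0 := ne_of_gt (hr.trans hrr')
  calc ∑ k ∈ Finset.range (l + 1),
        (l.choose k : ℝ) * p ^ k * (1 - p) ^ (l - k) * Meix c r n k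
      = ∑ m ∈ Finset.range (n + 1),
          poch c n * ((-r) ^ (n - m) * ffall n m / (poch c m * m.factorial)) *
          (∑ k ∈ Finset.range (l + 1),
            (l.choose k : ℝ) * p ^ k * (1 - p) ^ (l - k) * ffall (k : ℝ) m) := by
        simp only [Meix, Finset.mul_sum, Finset.sum_mul]
        rw [Finset.sum_comm]
        exact Finset.sum_congr rfl fun m _ => Finset.sum_congr rfl fun k _ => by ring
    _ = ∑ m ∈ Finset.range (n + 1),
          poch c n * ((-r) ^ (n - m) * ffall n m / (poch c m * m.factorial)) *
          (p ^ m * ffall (l : ℝ) m) := by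
        exact Finset.sum_congr rfl fun m _ => by rw [binom_ffall]
    _ = (r / r') ^ n * Meix c r' n l := by
        rw [Meix, Finset.mul_sum, Finset.mul_sum]
        refine Finset.sum_congr rfl fun m hm => ?_
        rw [Finset.mem_range] at hm
        have hmn : m ≤ n := Nat.le_of_lt_succ hm
        have key : (-r) ^ (n - m) * p ^ m = p ^ n * (-r') ^ (n - m) := by
          have h1 : p ^ n = p ^ m * p ^ (n - m) := by
            rw [← pow_add, Nat.add_sub_cancel' hmn]
          have h2 : p * (-r') = -r := by
            rw [hp]
            field_simp
          rw [h1, mul_assoc, ← mul_pow, h2, mul_comm]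
        linear_combination
          (poch c n * ffall n m * ffall (l:ℝ) m / (poch c m * m.factorial)) * key
end

section
/- For r' > r > 0 and c > 0, the Meixner Q-matrices commute with the binomial links: Q^{(c)}_{r'} Λ^{r'}_r = Λ^{r'}_r Q^{(c)}_r as operators on polynomial functions on ℤ_+ (equivalently, as matrices of format ℤ_+ × ℤ_+, both sides having finitely many nonzero entries per row). -/
/-- The Meixner `Q`-matrix on `ℤ₊ × ℤ₊`. -/
noncomputable def meixnerQ (c r : ℝ) (k j : ℕ) : ℝ :=
  if j = k + 1 then r * (c + k)
  else if j + 1 = k then (r + 1) * k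
  else if j = k then -((2 * r + 1) * k + r * c)
  else 0

/-- The binomial link matrix. -/
noncomputable def binomLink (r r' : ℝ) (l k : ℕ) : ℝ :=
  (l.choose k : ℝ) * (r / r') ^ k * (1 - r / r') ^ (l - k)

lemma meixnerQ_up' (c r : ℝ) {k j : ℕ} (h : j = k+1) : meixnerQ c r k j = r*(c+k) := by
  subst h; simp [meixnerQ]

lemma meixnerQ_down' (c r : ℝ) {k j : ℕ} (h : j+1 = k) : meixnerQ c r k j = (r+1)*k := by
  subst h; simp [meixnerQ]; omega

lemma meixnerQ_diag' (c r : ℝ) {k j : ℕ} (h : j = k) :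
    meixnerQ c r k j = -((2*r+1)*k + r*c) := by
  subst h; simp [meixnerQ]

lemma meixnerQ_zero' (c r : ℝ) {k j : ℕ} (h1 : j ≠ k+1) (h2 : j+1 ≠ k) (h3 : j ≠ k) :
    meixnerQ c r k j = 0 := by
  simp [meixnerQ, h1, h2, h3]

lemma binomLink_eval (r r' : ℝ) {l k m : ℕ} (h : l - k = m) :
    binomLink r r' l k = (l.choose k : ℝ) * (r/r')^k * (1 - r/r')^m := by
  rw [binomLink, h]

lemma binomLink_zero (r r' : ℝ) {l k : ℕ} (h : l < k) : binomLink r r' l k = 0 := by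
  simp [binomLink, Nat.choose_eq_zero_of_lt h]

lemma tsum_triple (f : ℕ → ℝ) (a : ℕ)
    (h : ∀ k, k ≠ a → k ≠ a+1 → k ≠ a+2 → f k = 0) :
    ∑' k : ℕ, f k = f a + f (a+1) + f (a+2) := by
  rw [tsum_eq_sum (s := {a, a+1, a+2})
    (by intro k hk; simp at hk; exact h k hk.1 hk.2.1 hk.2.2)]
  rw [Finset.sum_insert (by simp), Finset.sum_insert (by simp), Finset.sum_singleton]
  ring

lemma key_choose (n k : ℕ) : (n+1) * n.choose k = (n+1).choose k * (n+1-k) := by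
  rw [← Nat.choose_succ_right_eq]
  exact Nat.add_one_mul_choose_eq n k


set_option maxHeartbeats 2000000 in
/-- The Meixner `Q`-matrices commute with the binomial links:
`Q^{(c)}_{r'} Λ^{r'}_r = Λ^{r'}_r Q^{(c)}_r`. -/
theorem meixnerQ_commutes_with_binomLink (c : ℝ) (hc : 0 < c)
    (r r' : ℝ) (hr : 0 < r) (hrr' : r < r') (l j : ℕ) :
    ∑' k : ℕ, meixnerQ c r' l k * binomLink r r' k j
      = ∑' k : ℕ, binomLink r r' l k * meixnerQ c r k j := by
  have hr' : (0:ℝ) < r' := hr.trans hrr'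
  have hne : r' ≠ 0 := ne_of_gt hr'
  rcases lt_or_ge (l+1) j with hcase | hcase
  · -- j ≥ l + 2 : both sides vanish
    rw [tsum_eq_sum (s := (∅ : Finset ℕ)) ?_, tsum_eq_sum (s := (∅ : Finset ℕ)) ?_]
    · simp
    · intro k _
      rcases lt_or_ge l k with hk | hk
      · rw [binomLink_zero _ _ hk, zero_mul]
      · rw [meixnerQ_zero' _ _ (by omega) (by omega) (by omega), mul_zero]
    · intro k _
      rcases lt_or_ge (l+1) k with hk | hk
      · rw [meixnerQ_zero' _ _ (by omega) (by omega) (by omega), zero_mul]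
      · rw [binomLink_zero _ _ (by omega), mul_zero]
  · rcases eq_or_lt_of_le hcase with hj | hj
    · -- j = l + 1
      subst hj
      rcases l with _ | n
      · -- l = 0, j = 1
        rw [tsum_triple _ 0 (fun k h0 h1 h2 => by
              rw [meixnerQ_zero' _ _ (by omega) (by omega) (by omega), zero_mul]),
            tsum_triple _ 0 (fun k h0 h1 h2 => by
              rw [meixnerQ_zero' _ _ (by omega) (by omega) (by omega), mul_zero])]
        norm_num [meixnerQ, binomLink]
        field_simp
      · -- l = n+1, j = n+2
        rw [tsum_triple _ n (fun k h0 h1 h2 => by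
              rw [meixnerQ_zero' _ _ (by omega) (by omega) (by omega), zero_mul]),
            tsum_triple _ (n+1) (fun k h0 h1 h2 => by
              rw [meixnerQ_zero' _ _ (by omega) (by omega) (by omega), mul_zero])]
        simp only [show n+1+1 = n+2 by omega, show n+1+2 = n+3 by omega]
        rw [binomLink_zero r r' (by omega : n < n + 2),
            binomLink_zero r r' (by omega : n + 1 < n + 2),
            binomLink_zero r r' (by omega : n + 1 < n + 3),
            meixnerQ_up' c r' (by omega : n + 2 = (n + 1) + 1),
            binomLink_eval r r' (by omega : (n+2) - (n+2) = 0),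
            binomLink_eval r r' (by omega : (n+1) - (n+1) = 0),
            meixnerQ_up' c r (by omega : n + 2 = (n + 1) + 1)]
        rw [Nat.choose_self, Nat.choose_self]
        push_cast
        simp only [one_sub_div hne, div_pow]
        field_simp
        ring
    · -- j ≤ l
      rcases Nat.eq_zero_or_pos j with rfl | hjpos
      · -- j = 0
        rcases l with _ | n
        · -- l = 0
          rw [tsum_triple _ 0 (fun k h0 h1 h2 => by
                rw [meixnerQ_zero' _ _ (by omega) (by omega) (by omega), zero_mul]),
              tsum_triple _ 0 (fun k h0 h1 h2 => by
                rw [meixnerQ_zero' _ _ (by omega) (by omega) (by omega), mul_zero])]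
          norm_num [meixnerQ, binomLink]
          field_simp
          ring
        · -- l = n+1
          rw [tsum_triple _ n (fun k h0 h1 h2 => by
                rw [meixnerQ_zero' _ _ (by omega) (by omega) (by omega), zero_mul]),
              tsum_triple _ 0 (fun k h0 h1 h2 => by
                rw [meixnerQ_zero' _ _ (by omega) (by omega) (by omega), mul_zero])]
          simp only [Nat.zero_add]
          rw [meixnerQ_down' c r' (by omega : n + 1 = n + 1),
              meixnerQ_diag' c r' (rfl : (n+1:ℕ) = n+1),
              meixnerQ_up' c r' (by omega : n + 2 = (n + 1) + 1),
              meixnerQ_diag' c r (rfl : (0:ℕ) = 0),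
              meixnerQ_down' c r (by omega : 0 + 1 = 1),
              meixnerQ_zero' c r (by omega) (by omega) (by omega : (0:ℕ) ≠ 2),
              binomLink_eval r r' (by omega : n - 0 = n),
              binomLink_eval r r' (by omega : (n+1) - 0 = n+1),
              binomLink_eval r r' (by omega : (n+2) - 0 = n+2),
              binomLink_eval r r' (by omega : (n+1) - 1 = n)]
          rw [Nat.choose_zero_right, Nat.choose_zero_right, Nat.choose_zero_right,
              Nat.choose_one_right]
          push_cast
          simp only [one_sub_div hne, div_pow]
          field_simp
          ring
      · obtain ⟨i, rfl⟩ : ∃ i, j = i + 1 := ⟨j - 1, by omega⟩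
        rcases eq_or_lt_of_le (by omega : i + 1 ≤ l) with hl | hl
        · -- j = l = i+1
          subst hl
          rw [tsum_triple _ i (fun k h0 h1 h2 => by
                rw [meixnerQ_zero' _ _ (by omega) (by omega) (by omega), zero_mul]),
              tsum_triple _ i (fun k h0 h1 h2 => by
                rw [meixnerQ_zero' _ _ (by omega) (by omega) (by omega), mul_zero])]
          rw [binomLink_zero r r' (by omega : i < i + 1),
              meixnerQ_diag' c r' (rfl : (i+1:ℕ) = i+1),
              meixnerQ_up' c r' (by omega : i + 2 = (i + 1) + 1),
              meixnerQ_up' c r (k := i) rfl,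
              meixnerQ_diag' c r (rfl : (i+1:ℕ) = i+1),
              binomLink_zero r r' (by omega : i + 1 < i + 2),
              binomLink_eval r r' (by omega : (i+1) - (i+1) = 0),
              binomLink_eval r r' (by omega : (i+2) - (i+1) = 1),
              binomLink_eval r r' (by omega : (i+1) - i = 1)]
          have hch1 : (i+2).choose (i+1) = i+2 := by
            rw [show i+2 = i+1+1 by omega, Nat.choose_succ_self_right]
          have hch2 : (i+1).choose i = i+1 := Nat.choose_succ_self_right i
          rw [Nat.choose_self, hch1, hch2]
          push_cast
          simp only [one_sub_div hne, div_pow]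
          field_simp
          ring
        · -- j = i+1 < l
          obtain ⟨m, rfl⟩ : ∃ m, l = i + 2 + m := ⟨l - (i+2), by omega⟩
          rw [tsum_triple _ (i+1+m) (fun k h0 h1 h2 => by
                rw [meixnerQ_zero' _ _ (by omega) (by omega) (by omega), zero_mul]),
              tsum_triple _ i (fun k h0 h1 h2 => by
                rw [meixnerQ_zero' _ _ (by omega) (by omega) (by omega), mul_zero])]
          rw [meixnerQ_down' c r' (by omega : (i+1+m) + 1 = i+2+m),
              meixnerQ_diag' c r' (by omega : i+1+m+1 = i+2+m),
              meixnerQ_up' c r' (by omega : i+1+m+2 = (i+2+m) + 1),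
              meixnerQ_up' c r (k := i) rfl,
              meixnerQ_diag' c r (rfl : (i+1:ℕ) = i+1),
              meixnerQ_down' c r (by omega : (i+1) + 1 = i+2),
              binomLink_eval r r' (by omega : (i+1+m) - (i+1) = m),
              binomLink_eval r r' (by omega : (i+1+m+1) - (i+1) = m+1),
              binomLink_eval r r' (by omega : (i+1+m+2) - (i+1) = m+2),
              binomLink_eval r r' (by omega : (i+2+m) - i = m+2),
              binomLink_eval r r' (by omega : (i+2+m) - (i+1) = m+1),
              binomLink_eval r r' (by omega : (i+2+m) - (i+2) = m)]
          have kA := key_choose (i+1+m) (i+1)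
          rw [show i+1+m+1 - (i+1) = m+1 by omega] at kA
          have kD := key_choose (i+1+m+1) (i+1)
          rw [show i+1+m+1+1 - (i+1) = m+2 by omega,
              show i+1+m+1+1 = i+1+m+2 by omega] at kD
          have kE := Nat.choose_succ_right_eq (i+2+m) i
          rw [show (i+2+m) - i = m+2 by omega] at kE
          have kF := Nat.choose_succ_right_eq (i+2+m) (i+1)
          rw [show (i+2+m) - (i+1) = m+1 by omega,
              show i+1+1 = i+2 by omega] at kF
          have h2m : ((i:ℝ)+1+m+1) ≠ 0 := by positivity
          have hm2 : ((m:ℝ)+2) ≠ 0 := by positivity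
          have hi2 : ((i:ℝ)+2) ≠ 0 := by positivity
          have hBB : ((i+1+m+1).choose (i+1) : ℝ) = ((i+2+m).choose (i+1) : ℝ) := by
            rw [show i+1+m+1 = i+2+m by omega]
          have hAe : ((i+1+m).choose (i+1) : ℝ)
              = ((i+2+m).choose (i+1) : ℝ) * ((m:ℝ)+1) / ((i:ℝ)+1+m+1) := by
            rw [eq_div_iff h2m, ← hBB]
            have := congrArg (Nat.cast : ℕ → ℝ) kA
            push_cast at this
            linarith
          have hDe : ((i+1+m+2).choose (i+1) : ℝ)
              = ((i:ℝ)+1+m+2) * ((i+2+m).choose (i+1) : ℝ) / ((m:ℝ)+2) := by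
            rw [eq_div_iff hm2, ← hBB]
            have := congrArg (Nat.cast : ℕ → ℝ) kD
            push_cast at this
            linarith
          have hEe : ((i+2+m).choose i : ℝ)
              = ((i+2+m).choose (i+1) : ℝ) * ((i:ℝ)+1) / ((m:ℝ)+2) := by
            rw [eq_div_iff hm2]
            have := congrArg (Nat.cast : ℕ → ℝ) kE
            push_cast at this
            linarith
          have hFe : ((i+2+m).choose (i+2) : ℝ)
              = ((i+2+m).choose (i+1) : ℝ) * ((m:ℝ)+1) / ((i:ℝ)+2) := by
            rw [eq_div_iff hi2]
            have := congrArg (Nat.cast : ℕ → ℝ) kF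
            push_cast at this
            linarith
          rw [hAe, hDe, hEe, hFe]
          push_cast
          rw [hBB]
          simp only [one_sub_div hne, div_pow]
          field_simp
          ring
end

section
/- For any r > 0, c > 0, and n ∈ ℤ_+, the Poisson link maps the Meixner polynomial to the Laguerre polynomial: ∑_{l=0}^∞ e^{-rx}(rx)^l/l! · Meix_n(l; c, r) = r^n · Lag_n(x; c) for all x ≥ 0. -/
/-- The monic Laguerre polynomial. -/
noncomputable def Lag (c : ℝ) (n : ℕ) (x : ℝ) : ℝ :=
  poch c n * ∑ m ∈ Finset.range (n + 1),
    (-1 : ℝ) ^ (n - m) * ffall n m / (poch c m * m.factorial) * x ^ m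

lemma ffall_nat_of_lt {l m : ℕ} (h : l < m) : ffall (l : ℝ) m = 0 := by
  apply Finset.prod_eq_zero (Finset.mem_range.mpr h)
  simp

lemma ffall_add (k m : ℕ) :
    ffall ((k + m : ℕ) : ℝ) m * (k.factorial : ℝ) = ((k + m).factorial : ℝ) := by
  have h1 : ffall ((k + m : ℕ) : ℝ) m = ((k + m).descFactorial m : ℝ) := by
    rw [Nat.descFactorial_eq_prod_range]
    push_cast [ffall]
    refine Finset.prod_congr rfl fun i hi => ?_
    rw [Nat.cast_sub (le_trans (Finset.mem_range.mp hi).le (Nat.le_add_left m k))]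
    push_cast
    ring
  rw [h1, Nat.add_descFactorial_eq_ascFactorial, ← Nat.cast_mul, mul_comm,
    Nat.factorial_mul_ascFactorial]

/-- Poisson factorial moments. -/
lemma poisson_moment (t : ℝ) (m : ℕ) :
    HasSum (fun l : ℕ => Real.exp (-t) * t ^ l / l.factorial * ffall (l : ℝ) m) (t ^ m) := by
  have hinj : Function.Injective (fun k : ℕ => k + m) := fun a b h => by simpa using h
  apply (Function.Injective.hasSum_iff hinj (by
    intro l hl
    have : l < m := by
      by_contra h
      exact hl ⟨l - m, by simp [Nat.sub_add_cancel (not_lt.mp h)]⟩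
    simp [ffall_nat_of_lt this])).mp
  have key : ((fun l : ℕ => Real.exp (-t) * t ^ l / l.factorial * ffall (l : ℝ) m)
      ∘ fun k : ℕ => k + m) = fun k : ℕ => (Real.exp (-t) * t ^ m) * (t ^ k / k.factorial) := by
    funext k
    simp only [Function.comp_apply]
    have hkfac : (k.factorial : ℝ) ≠ 0 := Nat.cast_ne_zero.mpr (Nat.factorial_ne_zero _)
    have hfac : ((k + m).factorial : ℝ) ≠ 0 := Nat.cast_ne_zero.mpr (Nat.factorial_ne_zero _)
    have h2 : ffall ((k + m : ℕ) : ℝ) m = ((k + m).factorial : ℝ) / k.factorial := by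
      rw [eq_div_iff hkfac]; exact ffall_add k m
    rw [h2, pow_add]
    field_simp
  rw [key]
  have hsum : HasSum (fun k : ℕ => t ^ k / k.factorial) (Real.exp t) := by
    simpa [Real.exp_eq_exp_ℝ] using NormedSpace.expSeries_div_hasSum_exp t
  have := hsum.mul_left (Real.exp (-t) * t ^ m)
  convert this using 1
  · rfl
  rw [mul_assoc, mul_comm (t ^ m), ← mul_assoc, ← Real.exp_add, neg_add_cancel, Real.exp_zero,
    one_mul]

/-- The Poisson link maps the Meixner polynomial to the Laguerre polynomial. -/
theorem poisson_link_meixner_to_laguerre (c r : ℝ) (hc : 0 < c) (hr : 0 < r)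
    (n : ℕ) (x : ℝ) (hx : 0 ≤ x) :
    ∑' l : ℕ, Real.exp (-(r * x)) * (r * x) ^ l / l.factorial * Meix c r n l
      = r ^ n * Lag c n x := by
  set t := r * x with ht
  have hterm : ∀ l : ℕ, Real.exp (-t) * t ^ l / l.factorial * Meix c r n l
      = ∑ m ∈ Finset.range (n + 1), (poch c n * ((-r) ^ (n - m) * ffall n m / (poch c m * m.factorial)))
        * (Real.exp (-t) * t ^ l / l.factorial * ffall (l : ℝ) m) := by
    intro l
    rw [Meix, Finset.mul_sum, Finset.mul_sum]
    refine Finset.sum_congr rfl fun m _ => ?_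
    ring
  rw [tsum_congr hterm, Summable.tsum_finsetSum (fun m _ =>
    ((poisson_moment t m).mul_left _).summable)]
  have : ∀ m ∈ Finset.range (n + 1),
      ∑' l : ℕ, (poch c n * ((-r) ^ (n - m) * ffall n m / (poch c m * m.factorial)))
        * (Real.exp (-t) * t ^ l / l.factorial * ffall (l : ℝ) m)
      = (poch c n * ((-r) ^ (n - m) * ffall n m / (poch c m * m.factorial))) * t ^ m := by
    intro m _
    exact ((poisson_moment t m).mul_left _).tsum_eq
  rw [Finset.sum_congr rfl this, Lag, Finset.mul_sum, Finset.mul_sum]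
  refine Finset.sum_congr rfl fun m hm => ?_
  have hmn : m ≤ n := Nat.lt_succ_iff.mp (Finset.mem_range.mp hm)
  have hpow : (-r) ^ (n - m) * t ^ m = (-1 : ℝ) ^ (n - m) * r ^ n * x ^ m := by
    have h1 : r ^ (n - m) * r ^ m = r ^ n := by rw [← pow_add, Nat.sub_add_cancel hmn]
    rw [ht, mul_pow, neg_pow]
    linear_combination ((-1 : ℝ) ^ (n - m) * x ^ m) * h1
  linear_combination (poch c n * ffall (n : ℝ) m / (poch c m * m.factorial)) * hpow
end

section
/- For any fixed s > 0, m ∈ ℤ_+, the binomial link converges uniformly to the Poisson link under the scaling l = rx: lim_{r→∞} sup_{l ∈ ℤ_+} | C(l,m)(s/r)^m(1-s/r)^{l-m} − e^{-s·l/r}(s·l/r)^m/m! | = 0. -/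
private lemma exp_pow_bound (k : ℕ) {y : ℝ} (hy : 0 ≤ y) :
    y ^ k * Real.exp (-y) ≤ k.factorial := by
  have h1 : y ^ k / k.factorial ≤ Real.exp y := by
    calc y ^ k / (k.factorial : ℝ)
        ≤ ∑ i ∈ Finset.range (k+1), y ^ i / i.factorial :=
          Finset.single_le_sum (f := fun i => y ^ i / (i.factorial : ℝ))
            (fun i _ => by positivity) (Finset.self_mem_range_succ k)
      _ ≤ Real.exp y := Real.sum_le_exp_of_nonneg hy _
  have h2 : y ^ k ≤ k.factorial * Real.exp y := by
    rw [div_le_iff₀ (by positivity)] at h1; linarith [h1]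
  rw [Real.exp_neg, mul_inv_le_iff₀' (Real.exp_pos y)]
  linarith

private lemma pow_sub_pow_le' {a b : ℝ} (hb : 0 ≤ b) (hba : b ≤ a) :
    ∀ k : ℕ, a ^ (k+1) - b ^ (k+1) ≤ ((k:ℝ)+1) * a ^ k * (a - b) := by
  intro k
  induction k with
  | zero => simp
  | succ k IH =>
    have ha : 0 ≤ a := hb.trans hba
    have hab : 0 ≤ a - b := sub_nonneg.mpr hba
    have hpow : b ^ (k+1) ≤ a ^ (k+1) := pow_le_pow_left₀ hb hba _
    have h1 : a * (a ^ (k+1) - b ^ (k+1)) ≤ a * (((k:ℝ)+1) * a ^ k * (a - b)) :=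
      mul_le_mul_of_nonneg_left IH ha
    have h2 : (a - b) * b ^ (k+1) ≤ (a - b) * a ^ (k+1) :=
      mul_le_mul_of_nonneg_left hpow hab
    have e1 : a ^ (k+1+1) - b ^ (k+1+1)
        = a * (a ^ (k+1) - b ^ (k+1)) + (a - b) * b ^ (k+1) := by ring
    have e2 : a * (((k:ℝ)+1) * a ^ k * (a - b)) + (a - b) * a ^ (k+1)
        = (((k:ℝ)+1)+1) * a ^ (k+1) * (a - b) := by ring
    push_cast
    linarith

private lemma desc_lower (l m : ℕ) (hlm : m ≤ l) :
    ((l:ℝ))^m - (l.descFactorial m : ℝ) ≤ (m:ℝ)^2 * (l:ℝ)^(m-1) := by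
  have hdge : ((l - m : ℕ):ℝ)^m ≤ (l.descFactorial m : ℝ) := by
    have h1 : (l - m) ^ m ≤ l.descFactorial m := by
      calc (l - m) ^ m ≤ (l + 1 - m) ^ m := Nat.pow_le_pow_left (by omega) m
        _ ≤ l.descFactorial m := Nat.pow_sub_le_descFactorial l m
    exact_mod_cast h1
  cases m with
  | zero => simp
  | succ k =>
    have hcast : ((l - (k+1) : ℕ):ℝ) = (l:ℝ) - ((k:ℝ)+1) := by
      push_cast [Nat.cast_sub hlm]; ring
    rw [hcast] at hdge
    have hb0 : (0:ℝ) ≤ (l:ℝ) - ((k:ℝ)+1) := by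
      have : ((k+1:ℕ):ℝ) ≤ (l:ℝ) := Nat.cast_le.mpr hlm
      push_cast at this; linarith
    have hba : (l:ℝ) - ((k:ℝ)+1) ≤ (l:ℝ) := by linarith [Nat.cast_nonneg (α := ℝ) k]
    have key := pow_sub_pow_le' hb0 hba k
    have hk1 : k + 1 - 1 = k := by omega
    rw [hk1]
    push_cast
    nlinarith [hdge, key, pow_nonneg (Nat.cast_nonneg (α := ℝ) l) k]

private lemma one_sub_ge_exp {p : ℝ} (hp0 : 0 < p) (hp : p ≤ 1/2) :
    Real.exp (-(p + 2*p^2)) ≤ 1 - p := by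
  have h3 : (1:ℝ) + (p + 2*p^2) ≤ Real.exp (p + 2*p^2) := by
    linarith [Real.add_one_le_exp (p + 2*p^2)]
  have h4 : (1:ℝ) ≤ (1 - p) * (1 + (p + 2*p^2)) := by nlinarith
  have h5 : Real.exp (-(p+2*p^2)) * (1 + (p+2*p^2)) ≤ 1 := by
    have := mul_le_mul_of_nonneg_left h3 (Real.exp_pos (-(p+2*p^2))).le
    rwa [← Real.exp_add, neg_add_cancel, Real.exp_zero] at this
  nlinarith [Real.exp_pos (-(p+2*p^2))]

private lemma qpow_le_exp {p : ℝ} (hp1 : p ≤ 1) (n : ℕ) :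
    (1-p) ^ n ≤ Real.exp (-(p * n)) := by
  calc (1-p) ^ n ≤ (Real.exp (-p)) ^ n :=
        pow_le_pow_left₀ (by linarith) (by linarith [Real.add_one_le_exp (-p)]) n
    _ = Real.exp (-(p * n)) := by rw [← Real.exp_nat_mul]; congr 1; ring

private lemma abs_qpow_sub_exp {p : ℝ} (hp0 : 0 < p) (hp : p ≤ 1/2) (n : ℕ) :
    |(1-p)^n - Real.exp (-(p*n))| ≤ Real.exp (-(p*n)) * (2*p^2*n) := by
  have hle : (1-p) ^ n ≤ Real.exp (-(p * n)) := qpow_le_exp (by linarith) n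
  have hge : Real.exp (-(p * n)) * (1 - 2*p^2*n) ≤ (1-p) ^ n := by
    calc Real.exp (-(p * n)) * (1 - 2*p^2*(n:ℝ))
        ≤ Real.exp (-(p * n)) * Real.exp (-(2*p^2*n)) := by
          apply mul_le_mul_of_nonneg_left ?_ (Real.exp_pos _).le
          linarith [Real.add_one_le_exp (-(2*p^2*(n:ℝ)))]
      _ = (Real.exp (-(p + 2*p^2))) ^ n := by
          rw [← Real.exp_add, ← Real.exp_nat_mul]; congr 1; ring
      _ ≤ (1-p) ^ n := pow_le_pow_left₀ (Real.exp_pos _).le (one_sub_ge_exp hp0 hp) n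
  rw [abs_of_nonpos (by linarith)]
  nlinarith [hge]

private lemma term1_bound {p L : ℝ} (hp : 0 ≤ p) (hpL : 0 ≤ p * L) (m : ℕ) :
    (m:ℝ)^2 * (p^m * L^(m-1) * Real.exp (-(p*L))) ≤ (m:ℝ)^2 * (p * (m-1).factorial) := by
  cases m with
  | zero => simp
  | succ k =>
    apply mul_le_mul_of_nonneg_left ?_ (by positivity)
    have hk1 : k + 1 - 1 = k := by omega
    rw [hk1]
    have h1 : p^(k+1) * L^k * Real.exp (-(p*L)) = p * ((p*L)^k * Real.exp (-(p*L))) := by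
      rw [mul_pow]; ring
    rw [h1]
    exact mul_le_mul_of_nonneg_left (exp_pow_bound k hpL) hp

set_option maxHeartbeats 400000 in
/-- For fixed `s > 0` and `m`, the binomial link converges to the Poisson link
uniformly in `l` under the scaling `x = l/r`. -/
theorem binomial_link_tendsto_poisson_link (s : ℝ) (hs : 0 < s) (m : ℕ) :
    ∀ ε > 0, ∃ R : ℝ, ∀ r : ℝ, R ≤ r → ∀ l : ℕ,
      |(l.choose m : ℝ) * (s / r) ^ m * (1 - s / r) ^ (l - m)
          - Real.exp (-(s * l / r)) * (s * l / r) ^ m / m.factorial| < ε := by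
  intro ε hε
  set K : ℝ := (m:ℝ)^2 * (m-1).factorial + 2 * (m+1).factorial + (m:ℝ) * m.factorial with hK
  have hK0 : 0 ≤ K := by positivity
  set C0 : ℝ := Real.exp m * s * K / m.factorial + s * m with hC0
  have hexpsK : (0:ℝ) ≤ Real.exp m * s * K / m.factorial := by positivity
  have hC00 : 0 ≤ C0 := by rw [hC0]; positivity
  clear_value K C0
  refine ⟨max (max (2*s) (s*m+1)) ((C0+1)/ε), fun r hr l => ?_⟩
  have hr1 : 2*s ≤ r := le_trans (le_trans (le_max_left _ _) (le_max_left _ _)) hr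
  have hr2 : s*m+1 ≤ r := le_trans (le_trans (le_max_right _ _) (le_max_left _ _)) hr
  have hr3 : (C0+1)/ε ≤ r := le_trans (le_max_right _ _) hr
  have hr0 : 0 < r := by linarith only [hs, hr1]
  have hsm0 : (0:ℝ) ≤ s*m := by positivity
  have hfin : C0 / r < ε := by
    rw [div_lt_iff₀ hr0]
    rw [div_le_iff₀ hε] at hr3
    linarith only [hr3]
  suffices h : |(l.choose m : ℝ) * (s / r) ^ m * (1 - s / r) ^ (l - m)
      - Real.exp (-(s * l / r)) * (s * l / r) ^ m / m.factorial| ≤ C0 / r from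
    lt_of_le_of_lt h hfin
  set p : ℝ := s / r with hp
  have hp0 : 0 < p := by positivity
  have hp_half : p ≤ 1/2 := by rw [hp, div_le_iff₀ hr0]; linarith only [hr1]
  have hp1 : p ≤ 1 := by linarith only [hp_half]
  have hq0 : (0:ℝ) ≤ 1 - p := by linarith only [hp1]
  clear_value p
  have hfact1 : (1:ℝ) ≤ m.factorial := by exact_mod_cast m.factorial_pos
  have hL0 : (0:ℝ) ≤ (l:ℝ) := Nat.cast_nonneg l
  rcases lt_or_ge l m with hlm | hlm
  · -- case l < m : binomial term is 0
    have hm0 : m ≠ 0 := by omega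
    have hch : l.choose m = 0 := Nat.choose_eq_zero_of_lt hlm
    rw [hch]
    push_cast
    rw [zero_mul, zero_mul, zero_sub, abs_neg, abs_of_nonneg (by positivity)]
    have hlm' : (l:ℝ) ≤ (m:ℝ) := by exact_mod_cast hlm.le
    have hxl : s * (l:ℝ) / r ≤ s * m / r := by gcongr
    have hx0 : (0:ℝ) ≤ s * l / r := by positivity
    have hsm1 : s * m / r ≤ 1 := by rw [div_le_one hr0]; linarith only [hr2]
    have e1 : Real.exp (-(s * l / r)) ≤ 1 :=
      Real.exp_le_one_iff.mpr (neg_nonpos.mpr (by positivity))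
    have e2 : (s * l / r) ^ m ≤ (s * m / r) ^ m := pow_le_pow_left₀ hx0 hxl m
    have h1 : Real.exp (-(s * l / r)) * (s * l / r) ^ m / m.factorial
        ≤ (s * l / r) ^ m := by
      rw [div_le_iff₀ (by positivity)]
      nlinarith only [pow_nonneg hx0 m, e1, hfact1, Real.exp_pos (-(s * (l:ℝ) / r))]
    have h2 : (s * m / r) ^ m ≤ s * m / r :=
      pow_le_of_le_one (by positivity) hsm1 hm0
    have h3 : s * m / r ≤ C0 / r := by
      apply div_le_div_of_nonneg_right ?_ hr0.le |>.trans_eq rfl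
      rw [hC0]; linarith only [hexpsK]
    linarith only [h1, e2, h2, h3]
  · -- main case m ≤ l
    set L : ℝ := (l:ℝ) with hLdef
    set a : ℝ := (l.descFactorial m : ℝ) with ha
    set N : ℕ := l - m with hN
    have hNcast : ((N : ℕ) : ℝ) = L - m := by rw [hN, Nat.cast_sub hlm]
    have hmL : (m:ℝ) ≤ L := Nat.cast_le.mpr hlm
    have hm0 : (0:ℝ) ≤ (m:ℝ) := Nat.cast_nonneg m
    have hdesc_le : a ≤ L ^ m := by
      rw [ha, hLdef]; exact_mod_cast Nat.descFactorial_le_pow l m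
    clear_value L a N
    have h_absaL : |a - L ^ m| ≤ (m:ℝ)^2 * L ^ (m-1) := by
      rw [abs_of_nonpos (by linarith only [hdesc_le]), neg_sub, hLdef, ha]
      exact desc_lower l m hlm
    -- exponential comparisons
    have hqN_le : (1-p) ^ N ≤ Real.exp (-(p * N)) := qpow_le_exp hp1 N
    have habs_q : |(1-p) ^ N - Real.exp (-(p * N))| ≤ Real.exp (-(p * N)) * (2*p^2*N) :=
      abs_qpow_sub_exp hp0 hp_half N
    have hsplit : Real.exp (-(p*L)) = Real.exp (-(p*N)) * Real.exp (-(p*m)) := by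
      rw [← Real.exp_add]; congr 1; rw [hNcast]; ring
    have hsplit' : Real.exp (-(p*N)) = Real.exp (-(p*L)) * Real.exp (p*m) := by
      rw [hsplit, mul_assoc, ← Real.exp_add, neg_add_cancel, Real.exp_zero, mul_one]
    have h1m : 1 - p * m ≤ Real.exp (-(p*m)) := by linarith [Real.add_one_le_exp (-(p*m))]
    have hle1 : Real.exp (-(p*m)) ≤ 1 :=
      Real.exp_le_one_iff.mpr (neg_nonpos.mpr (mul_nonneg hp0.le hm0))
    have hexp_diff1 : Real.exp (-(p*N)) - Real.exp (-(p*L)) ≤ Real.exp (-(p*N)) * (p*m) := by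
      have h := mul_le_mul_of_nonneg_left h1m (Real.exp_pos (-(p*(N:ℝ)))).le
      rw [hsplit]; linarith only [h]
    have hexp_diff2 : 0 ≤ Real.exp (-(p*N)) - Real.exp (-(p*L)) := by
      have h := mul_le_mul_of_nonneg_left hle1 (Real.exp_pos (-(p*(N:ℝ)))).le
      rw [hsplit]; linarith only [h]
    have hNleL : (N:ℝ) ≤ L := by rw [hNcast]; linarith only [hm0]
    have hN0 : (0:ℝ) ≤ (N:ℝ) := Nat.cast_nonneg N
    have habs_full : |(1-p) ^ N - Real.exp (-(p*L))|
        ≤ Real.exp (-(p*L)) * Real.exp (p*m) * (2*p^2*L + p*m) := by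
      calc |(1-p) ^ N - Real.exp (-(p*L))|
          ≤ |(1-p) ^ N - Real.exp (-(p*N))| + |Real.exp (-(p*N)) - Real.exp (-(p*L))| :=
            abs_sub_le _ _ _
        _ ≤ Real.exp (-(p*N)) * (2*p^2*N) + Real.exp (-(p*N)) * (p*m) := by
            rw [abs_of_nonneg hexp_diff2]
            linarith only [habs_q, hexp_diff1]
        _ ≤ Real.exp (-(p*N)) * (2*p^2*L) + Real.exp (-(p*N)) * (p*m) := by
            have hNL : 2*p^2*(N:ℝ) ≤ 2*p^2*L := by nlinarith only [hNleL, sq_nonneg p]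
            have h := mul_le_mul_of_nonneg_left hNL (Real.exp_pos (-(p*(N:ℝ)))).le
            linarith only [h]
        _ = Real.exp (-(p*L)) * Real.exp (p*m) * (2*p^2*L + p*m) := by
            rw [hsplit']; ring
    have hqN_le' : (1-p) ^ N ≤ Real.exp (-(p*L)) * Real.exp (p*m) := by
      rw [← hsplit']; exact hqN_le
    -- core bound
    have hcore : |a * (1-p) ^ N - L ^ m * Real.exp (-(p*L))|
        ≤ Real.exp (p*m) * Real.exp (-(p*L))
          * ((m:ℝ)^2 * L^(m-1) + 2*p^2*L^(m+1) + p*(m:ℝ)*L^m) := by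
      have hdecomp : a * (1-p) ^ N - L ^ m * Real.exp (-(p*L))
          = (a - L^m) * (1-p)^N + L^m * ((1-p)^N - Real.exp (-(p*L))) := by ring
      have hqNnn : (0:ℝ) ≤ (1-p)^N := pow_nonneg hq0 N
      have hLmnn : (0:ℝ) ≤ L^m := pow_nonneg hL0 m
      have t1 : |a - L^m| * (1-p)^N
          ≤ ((m:ℝ)^2 * L^(m-1)) * (Real.exp (-(p*L)) * Real.exp (p*m)) :=
        mul_le_mul h_absaL hqN_le' hqNnn
          (mul_nonneg (sq_nonneg _) (pow_nonneg hL0 _))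
      have t2 : L^m * |(1-p)^N - Real.exp (-(p*L))|
          ≤ L^m * (Real.exp (-(p*L)) * Real.exp (p*m) * (2*p^2*L + p*m)) :=
        mul_le_mul_of_nonneg_left habs_full hLmnn
      have hsum : ((m:ℝ)^2 * L^(m-1)) * (Real.exp (-(p*L)) * Real.exp (p*m))
          + L^m * (Real.exp (-(p*L)) * Real.exp (p*m) * (2*p^2*L + p*m))
          = Real.exp (p*m) * Real.exp (-(p*L))
            * ((m:ℝ)^2 * L^(m-1) + 2*p^2*L^(m+1) + p*(m:ℝ)*L^m) := by ring
      calc |a * (1-p) ^ N - L ^ m * Real.exp (-(p*L))|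
          = |(a - L^m) * (1-p)^N + L^m * ((1-p)^N - Real.exp (-(p*L)))| := by rw [hdecomp]
        _ ≤ |(a - L^m) * (1-p)^N| + |L^m * ((1-p)^N - Real.exp (-(p*L)))| := abs_add_le _ _
        _ = |a - L^m| * (1-p)^N + L^m * |(1-p)^N - Real.exp (-(p*L))| := by
            rw [abs_mul, abs_mul, abs_of_nonneg hqNnn, abs_of_nonneg hLmnn]
        _ ≤ _ := by rw [← hsum]; exact add_le_add t1 t2
    -- relate goal expression to the core
    have hx : s * L / r = p * L := by rw [hp]; ring
    have ha' : a = (m.factorial : ℝ) * (l.choose m : ℝ) := by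
      rw [ha]; exact_mod_cast Nat.descFactorial_eq_factorial_mul_choose l m
    have hfactne : (m.factorial : ℝ) ≠ 0 := by positivity
    have key : (l.choose m : ℝ) * p ^ m * (1 - p) ^ N
        - Real.exp (-(s * L / r)) * (s * L / r) ^ m / m.factorial
        = p ^ m * (a * (1-p) ^ N - L ^ m * Real.exp (-(p*L))) / m.factorial := by
      rw [hx, ha']
      field_simp
      ring
    rw [key, abs_div, abs_of_nonneg (le_of_lt (by positivity : (0:ℝ) < (m.factorial:ℝ))),
      abs_mul, abs_of_nonneg (pow_nonneg hp0.le m)]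
    have hpL0 : (0:ℝ) ≤ p * L := mul_nonneg hp0.le hL0
    have A1 : (m:ℝ)^2 * (p^m * L^(m-1) * Real.exp (-(p*L)))
        ≤ (m:ℝ)^2 * (p * (m-1).factorial) := term1_bound hp0.le hpL0 m
    have A2 : p^m * p^2 * L^(m+1) * Real.exp (-(p*L)) ≤ p * (m+1).factorial := by
      have h1 : p^m * p^2 * L^(m+1) * Real.exp (-(p*L))
          = p * ((p*L)^(m+1) * Real.exp (-(p*L))) := by rw [mul_pow]; ring
      rw [h1]
      exact mul_le_mul_of_nonneg_left (exp_pow_bound (m+1) hpL0) hp0.le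
    have A3 : (m:ℝ) * (p^m * p * L^m * Real.exp (-(p*L))) ≤ (m:ℝ) * (p * m.factorial) := by
      apply mul_le_mul_of_nonneg_left ?_ hm0
      have h1 : p^m * p * L^m * Real.exp (-(p*L)) = p * ((p*L)^m * Real.exp (-(p*L))) := by
        rw [mul_pow]; ring
      rw [h1]
      exact mul_le_mul_of_nonneg_left (exp_pow_bound m hpL0) hp0.le
    have hsum2 : p^m * (Real.exp (p*m) * Real.exp (-(p*L))
          * ((m:ℝ)^2 * L^(m-1) + 2*p^2*L^(m+1) + p*(m:ℝ)*L^m))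
        ≤ Real.exp (p*m) * (p * K) := by
      have expand : p^m * (Real.exp (-(p*L))
          * ((m:ℝ)^2 * L^(m-1) + 2*p^2*L^(m+1) + p*(m:ℝ)*L^m))
          = (m:ℝ)^2 * (p^m * L^(m-1) * Real.exp (-(p*L)))
            + 2 * (p^m * p^2 * L^(m+1) * Real.exp (-(p*L)))
            + (m:ℝ) * (p^m * p * L^m * Real.exp (-(p*L))) := by ring
      have step : p^m * (Real.exp (-(p*L))
          * ((m:ℝ)^2 * L^(m-1) + 2*p^2*L^(m+1) + p*(m:ℝ)*L^m)) ≤ p * K := by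
        rw [expand, hK]; linarith only [A1, A2, A3]
      calc p^m * (Real.exp (p*m) * Real.exp (-(p*L))
            * ((m:ℝ)^2 * L^(m-1) + 2*p^2*L^(m+1) + p*(m:ℝ)*L^m))
          = Real.exp (p*m) * (p^m * (Real.exp (-(p*L))
            * ((m:ℝ)^2 * L^(m-1) + 2*p^2*L^(m+1) + p*(m:ℝ)*L^m))) := by ring
        _ ≤ Real.exp (p*m) * (p * K) :=
            mul_le_mul_of_nonneg_left step (Real.exp_pos _).le
    have hEm : Real.exp (p*m) ≤ Real.exp m := by
      apply Real.exp_le_exp.mpr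
      linarith only [mul_nonneg (sub_nonneg.mpr hp1) hm0]
    have hmain : p ^ m * |a * (1-p) ^ N - L ^ m * Real.exp (-(p*L))|
        ≤ Real.exp m * (p * K) := by
      calc p ^ m * |a * (1-p) ^ N - L ^ m * Real.exp (-(p*L))|
          ≤ p ^ m * (Real.exp (p*m) * Real.exp (-(p*L))
            * ((m:ℝ)^2 * L^(m-1) + 2*p^2*L^(m+1) + p*(m:ℝ)*L^m)) :=
            mul_le_mul_of_nonneg_left hcore (pow_nonneg hp0.le m)
        _ ≤ Real.exp (p*m) * (p * K) := hsum2
        _ ≤ Real.exp m * (p * K) :=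
            mul_le_mul_of_nonneg_right hEm (mul_nonneg hp0.le hK0)
    have hfinal : Real.exp m * (p * K) / m.factorial ≤ C0 / r := by
      rw [hC0, hp]
      have h1 : Real.exp (m:ℝ) * (s / r * K) / (m.factorial:ℝ)
          = (Real.exp (m:ℝ) * s * K / (m.factorial:ℝ)) / r := by
        field_simp
      rw [h1]
      exact div_le_div_of_nonneg_right (by linarith only [hsm0]) hr0.le
    calc p ^ m * |a * (1-p) ^ N - L ^ m * Real.exp (-(p*L))| / (m.factorial:ℝ)
        ≤ Real.exp m * (p * K) / (m.factorial:ℝ) :=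
          div_le_div_of_nonneg_right hmain (by positivity)
      _ ≤ C0 / r := hfinal
end

section
/- For every m ∈ ℤ_+ and s > 0, (1 - s/r)^{rx} · x^m converges to e^{-sx} · x^m uniformly in x ∈ ℝ_+ as r → +∞. -/
/-- Key bound: for `0 < t ≤ 1/2`, `-log (1 - t) ≤ t + 2 t ^ 2`. -/
lemma neg_log_one_sub_le {t : ℝ} (ht : 0 < t) (ht2 : t ≤ 1/2) :
    -Real.log (1 - t) ≤ t + 2 * t ^ 2 := by
  have h1 : (0:ℝ) < 1 - t := by linarith
  have hinv : (1 - t)⁻¹ ≤ 1 + t + 2 * t ^ 2 := by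
    rw [inv_le_iff_one_le_mul₀ h1]
    nlinarith
  have hpos : (0:ℝ) < (1 - t)⁻¹ := by positivity
  calc -Real.log (1 - t) = Real.log (1 - t)⁻¹ := (Real.log_inv _).symm
    _ ≤ (1 - t)⁻¹ - 1 := Real.log_le_sub_one_of_pos hpos
    _ ≤ t + 2 * t ^ 2 := by linarith

/-- `(1 - s/r)^{rx} x^m → e^{-sx} x^m` uniformly on `ℝ₊` as `r → +∞`. -/
theorem rpow_tendsto_exp_uniformly (m : ℕ) (s : ℝ) (hs : 0 < s) :
    ∀ ε > 0, ∃ R : ℝ, ∀ r : ℝ, R ≤ r → ∀ x : ℝ, 0 ≤ x →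
      |(1 - s / r) ^ (r * x) * x ^ m - Real.exp (-(s * x)) * x ^ m| < ε := by
  intro ε hε
  set C : ℝ := (m + 1).factorial / s ^ (m + 1) with hC
  have hCpos : 0 < C := by positivity
  refine ⟨max (2 * s) (2 * s ^ 2 * C / ε + 1), fun r hr x hx => ?_⟩
  have hr2s : 2 * s ≤ r := le_trans (le_max_left _ _) hr
  have hrε : 2 * s ^ 2 * C / ε + 1 ≤ r := le_trans (le_max_right _ _) hr
  have hrpos : 0 < r := by linarith
  set t : ℝ := s / r with htdef
  have htpos : 0 < t := by positivity
  have ht2 : t ≤ 1/2 := by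
    rw [htdef, div_le_iff₀ hrpos]; linarith
  have h1t : (0:ℝ) < 1 - t := by linarith
  -- rewrite rpow as exp
  have hrpow : (1 - s / r) ^ (r * x) = Real.exp (r * x * Real.log (1 - t)) := by
    rw [Real.rpow_def_of_pos h1t]; ring_nf
  -- a := -r * log(1 - t), with s ≤ a ≤ s + 2 s^2 / r
  set a : ℝ := -(r * Real.log (1 - t)) with ha
  have hlog_le : Real.log (1 - t) ≤ -t := by
    have := Real.log_le_sub_one_of_pos h1t
    linarith
  have has : s ≤ a := by
    have : r * Real.log (1 - t) ≤ r * (-t) := by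
      exact mul_le_mul_of_nonneg_left hlog_le hrpos.le
    have hrt : r * t = s := by rw [htdef]; field_simp
    rw [ha]; nlinarith
  have haub : a - s ≤ 2 * s ^ 2 / r := by
    have hlb := neg_log_one_sub_le htpos ht2
    have : a ≤ r * (t + 2 * t ^ 2) := by
      rw [ha]
      calc -(r * Real.log (1 - t)) = r * (-Real.log (1 - t)) := by ring
        _ ≤ r * (t + 2 * t ^ 2) := mul_le_mul_of_nonneg_left hlb hrpos.le
    have hrt : r * t = s := by rw [htdef]; field_simp
    have h2 : r * (t + 2 * t ^ 2) = s + 2 * s ^ 2 / r := by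
      field_simp [htdef]; linear_combination (r + 2 * (r * t + s)) * hrt
    linarith [this, h2 ▸ this]
  -- main difference bound
  have hexp_le : Real.exp (r * x * Real.log (1 - t)) ≤ Real.exp (-(s * x)) := by
    apply Real.exp_le_exp.mpr
    have : r * x * Real.log (1 - t) = -(a * x) := by rw [ha]; ring
    rw [this]
    have : s * x ≤ a * x := mul_le_mul_of_nonneg_right has hx
    linarith
  have hone_sub : Real.exp (-(s*x)) - Real.exp (-(a*x)) ≤ Real.exp (-(s*x)) * ((a - s) * x) := by
    have hu : 0 ≤ (a - s) * x := mul_nonneg (by linarith) hx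
    have h1e : 1 - Real.exp (-((a - s) * x)) ≤ (a - s) * x := by
      have := Real.add_one_le_exp (-((a - s) * x))
      linarith
    have hsplit : Real.exp (-(a*x)) = Real.exp (-(s*x)) * Real.exp (-((a - s)*x)) := by
      rw [← Real.exp_add]; ring_nf
    calc Real.exp (-(s*x)) - Real.exp (-(a*x))
        = Real.exp (-(s*x)) * (1 - Real.exp (-((a - s)*x))) := by rw [hsplit]; ring
      _ ≤ Real.exp (-(s*x)) * ((a - s) * x) :=
          mul_le_mul_of_nonneg_left h1e (Real.exp_nonneg _)
  -- bound exp(-sx) x^(m+1) ≤ C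
  have hCbound : Real.exp (-(s * x)) * x ^ (m + 1) ≤ C := by
    have h1 : (s * x) ^ (m + 1) / (m + 1).factorial ≤ Real.exp (s * x) :=
      Real.pow_div_factorial_le_exp (s * x) (mul_nonneg hs.le hx) (m + 1)
    have h2 : x ^ (m + 1) ≤ C * Real.exp (s * x) := by
      rw [hC]
      rw [mul_pow] at h1
      have hsp : (0:ℝ) < s ^ (m + 1) := by positivity
      have hfp : (0:ℝ) < (m + 1).factorial := by positivity
      rw [div_mul_eq_mul_div, le_div_iff₀ hsp, mul_comm (x ^ (m+1)) _ ]
      rw [div_le_iff₀ hfp] at h1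
      linarith
    calc Real.exp (-(s * x)) * x ^ (m + 1)
        ≤ Real.exp (-(s * x)) * (C * Real.exp (s * x)) :=
          mul_le_mul_of_nonneg_left h2 (Real.exp_nonneg _)
      _ = C := by rw [mul_comm C _, ← mul_assoc, ← Real.exp_add]; simp
  -- assemble
  have hdiff : |(1 - s / r) ^ (r * x) * x ^ m - Real.exp (-(s * x)) * x ^ m|
      ≤ (a - s) * C := by
    rw [hrpow]
    have hxm : (0:ℝ) ≤ x ^ m := by positivity
    have hle : Real.exp (r * x * Real.log (1 - t)) * x ^ m ≤ Real.exp (-(s * x)) * x ^ m :=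
      mul_le_mul_of_nonneg_right hexp_le hxm
    rw [abs_sub_comm, abs_of_nonneg (by linarith)]
    have heq : r * x * Real.log (1 - t) = -(a * x) := by rw [ha]; ring
    rw [heq]
    calc Real.exp (-(s * x)) * x ^ m - Real.exp (-(a * x)) * x ^ m
        = (Real.exp (-(s*x)) - Real.exp (-(a*x))) * x ^ m := by ring
      _ ≤ (Real.exp (-(s*x)) * ((a - s) * x)) * x ^ m := by
          apply mul_le_mul_of_nonneg_right hone_sub hxm
      _ = (a - s) * (Real.exp (-(s * x)) * x ^ (m + 1)) := by ring
      _ ≤ (a - s) * C := mul_le_mul_of_nonneg_left hCbound (by linarith)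
  have hfinal : (a - s) * C < ε := by
    have h1 : (a - s) * C ≤ (2 * s ^ 2 / r) * C :=
      mul_le_mul_of_nonneg_right haub hCpos.le
    have h2 : (2 * s ^ 2 / r) * C < ε := by
      rw [div_mul_eq_mul_div, div_lt_iff₀ hrpos]
      have hrgt : 2 * s ^ 2 * C / ε < r := by linarith
      rw [div_lt_iff₀ hε] at hrgt
      nlinarith
    exact lt_of_le_of_lt h1 h2
  exact lt_of_le_of_lt hdiff hfinal
end

section
/- For any fixed 0 < q < 1, the linear span of the functions x ↦ q^x · x^m, m = 0, 1, 2, …, is dense in the Banach space C_0(ℝ_+) of continuous real functions on [0,∞) vanishing at infinity, equipped with the supremum norm. -/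
open Filter ZeroAtInfty Topology



noncomputable instance : ConditionallyCompleteLinearOrder (Set.Ici (0:ℝ)) :=
  { @ordConnectedSubsetConditionallyCompleteLinearOrder ℝ (Set.Ici 0) _
      ⟨⟨0, Set.mem_Ici.2 le_rfl⟩⟩ _ with }

lemma ici_cocompact_eq_atTop : Filter.cocompact (Set.Ici (0:ℝ)) = Filter.atTop :=
  cocompact_eq_atTop

lemma ici_val_tendsto_atTop :
    Tendsto (fun x : Set.Ici (0:ℝ) => (x : ℝ)) atTop atTop :=
  tendsto_atTop_atTop.2 fun b =>
    ⟨⟨max b 0, Set.mem_Ici.2 (le_max_right _ _)⟩, fun a ha =>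
      le_trans (le_max_left b 0) (Subtype.coe_le_coe.2 ha)⟩

/-- The function `x ↦ exp (-(c*x)) * x^m` as an element of `C₀([0,∞))`, for `c > 0`. -/
noncomputable def expMon (c : ℝ) (hc : 0 < c) (m : ℕ) : C₀(Set.Ici (0:ℝ), ℝ) :=
  ⟨⟨fun x => Real.exp (-(c * (x : ℝ))) * (x : ℝ) ^ m, by fun_prop⟩, by
    rw [ici_cocompact_eq_atTop]
    have h1 : Tendsto (fun y : ℝ => y ^ m * Real.exp (-y)) atTop (𝓝 0) :=
      Real.tendsto_pow_mul_exp_neg_atTop_nhds_zero m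
    have h2 : Tendsto (fun y : ℝ => c * y) atTop atTop :=
      Tendsto.const_mul_atTop hc tendsto_id
    have h3 : Tendsto (fun y : ℝ => (1 / c ^ m) * ((c * y) ^ m * Real.exp (-(c * y))))
        atTop (𝓝 ((1 / c ^ m) * 0)) := ((h1.comp h2).const_mul _)
    rw [mul_zero] at h3
    have h4 : Tendsto (fun y : ℝ => Real.exp (-(c * y)) * y ^ m) atTop (𝓝 0) := by
      refine h3.congr fun y => ?_
      have hcm : (c : ℝ) ^ m ≠ 0 := by positivity
      field_simp
      ring
    exact h4.comp ici_val_tendsto_atTop⟩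

@[simp] lemma expMon_apply (c : ℝ) (hc : 0 < c) (m : ℕ) (x : Set.Ici (0:ℝ)) :
    expMon c hc m x = Real.exp (-(c * (x : ℝ))) * (x : ℝ) ^ m := rfl


lemma pow_self_le_exp_mul_factorial : ∀ j : ℕ, (j : ℝ) ^ j ≤ Real.exp j * j.factorial := by
  intro j
  induction j with
  | zero => simp
  | succ j ih =>
    rcases Nat.eq_zero_or_pos j with hj | hj
    · subst hj; simpa using Real.one_le_exp (by norm_num)
    · have hj' : (0:ℝ) < j := by exact_mod_cast hj
      have h1 : (j : ℝ) + 1 ≤ j * Real.exp (1 / j) := by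
        have := Real.add_one_le_exp (1 / (j:ℝ))
        calc (j:ℝ) + 1 = j * (1/j + 1) := by field_simp; ring
        _ ≤ j * Real.exp (1/j) := by nlinarith [Real.exp_pos (1/(j:ℝ))]
      have h2 : ((j:ℝ) + 1) ^ j ≤ (j * Real.exp (1 / j)) ^ j :=
        pow_le_pow_left₀ (by positivity) h1 j
      have h3 : ((j:ℝ) * Real.exp (1/j)) ^ j = (j:ℝ)^j * Real.exp 1 := by
        rw [mul_pow, ← Real.exp_nat_mul]
        congr 2
        field_simp
      have h4 : ((j:ℝ) + 1) ^ (j+1) ≤ ((j:ℝ)+1) * ((j:ℝ)^j * Real.exp 1) := by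
        rw [pow_succ, mul_comm (((j:ℝ)+1)^j)]
        exact mul_le_mul_of_nonneg_left (h3 ▸ h2) (by positivity)
      push_cast [Nat.factorial_succ]
      calc ((j:ℝ)+1) ^ (j+1) ≤ ((j:ℝ)+1) * ((j:ℝ)^j * Real.exp 1) := h4
      _ ≤ ((j:ℝ)+1) * ((Real.exp j * j.factorial) * Real.exp 1) := by
          have h5 : (0:ℝ) ≤ (j:ℝ)+1 := by positivity
          exact mul_le_mul_of_nonneg_left
            (mul_le_mul_of_nonneg_right ih (Real.exp_pos 1).le) h5
      _ = Real.exp ((j:ℝ)+1) * (((j:ℝ)+1) * j.factorial) := by rw [Real.exp_add]; ring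

lemma exp_mul_pow_le (c : ℝ) (hc : 0 < c) (m : ℕ) (u : ℝ) (hu : 0 ≤ u) :
    Real.exp (-(c * u)) * u ^ m ≤ ((m : ℝ) / (c * Real.exp 1)) ^ m := by
  rcases Nat.eq_zero_or_pos m with hm | hm
  · subst hm
    have : -(c*u) ≤ 0 := by nlinarith
    simpa using Real.exp_le_one_iff.2 this
  rcases eq_or_lt_of_le hu with hu0 | hu0
  · rw [← hu0, zero_pow hm.ne', mul_zero]
    positivity
  have hm' : (0:ℝ) < m := by exact_mod_cast hm
  have h1 : c * u / m ≤ Real.exp (c * u / m - 1) := by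
    have := Real.add_one_le_exp (c * u / m - 1); linarith
  have h2 : (c * u / m) ^ m ≤ Real.exp (c * u / m - 1) ^ m :=
    pow_le_pow_left₀ (by positivity) h1 m
  have h3 : Real.exp (c * u / m - 1) ^ m = Real.exp (c * u) / Real.exp m := by
    rw [← Real.exp_nat_mul, ← Real.exp_sub]
    congr 1
    field_simp
  have h4 : (c * u) ^ m ≤ Real.exp (c * u) * (m:ℝ) ^ m / Real.exp (m:ℝ) := by
    rw [h3] at h2
    have h2' := mul_le_mul_of_nonneg_left h2 (le_of_lt (by positivity : (0:ℝ) < (m:ℝ)^m))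
    rw [div_pow] at h2'
    calc (c*u)^m = (m:ℝ)^m * ((c*u)^m / (m:ℝ)^m) := by field_simp
    _ ≤ (m:ℝ)^m * (Real.exp (c*u) / Real.exp m) := h2'
    _ = Real.exp (c * u) * (m:ℝ)^m / Real.exp (m:ℝ) := by ring
  rw [div_pow, mul_pow, ← Real.exp_nat_mul, mul_one, le_div_iff₀ (by positivity)]
  have h5 : c^m * u^m * Real.exp (m:ℝ) ≤ Real.exp (c*u) * (m:ℝ)^m := by
    have h6 := (le_div_iff₀ (Real.exp_pos (m:ℝ))).1 h4
    calc c^m * u^m * Real.exp (m:ℝ) = (c*u)^m * Real.exp (m:ℝ) := by rw [mul_pow]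
    _ ≤ Real.exp (c*u) * (m:ℝ)^m := h6
  have h7 := mul_le_mul_of_nonneg_left h5 (Real.exp_pos (-(c*u))).le
  calc Real.exp (-(c*u)) * u^m * (c^m * Real.exp (m:ℝ))
      = Real.exp (-(c*u)) * (c^m * u^m * Real.exp (m:ℝ)) := by ring
  _ ≤ Real.exp (-(c*u)) * (Real.exp (c*u) * (m:ℝ)^m) := h7
  _ = (m:ℝ)^m := by rw [← mul_assoc, ← Real.exp_add, neg_add_cancel, Real.exp_zero, one_mul]

lemma norm_expMon_le (c : ℝ) (hc : 0 < c) (m : ℕ) :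
    ‖expMon c hc m‖ ≤ ((m : ℝ) / (c * Real.exp 1)) ^ m := by
  have hM : (0:ℝ) ≤ ((m : ℝ) / (c * Real.exp 1)) ^ m := by positivity
  rw [← ZeroAtInftyContinuousMap.norm_toBCF_eq_norm]
  refine (BoundedContinuousFunction.norm_le hM).2 fun x => ?_
  have h0 : (expMon c hc m).toBCF x = expMon c hc m x := rfl
  rw [h0, expMon_apply, Real.norm_eq_abs,
    abs_of_nonneg (mul_nonneg (Real.exp_pos _).le (pow_nonneg x.2 m))]
  exact exp_mul_pow_le c hc m x x.2

noncomputable def evalAM (x : Set.Ici (0:ℝ)) : C₀(Set.Ici (0:ℝ), ℝ) →+ ℝ where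
  toFun f := f x
  map_zero' := rfl
  map_add' _ _ := rfl

lemma continuous_evalAM (x : Set.Ici (0:ℝ)) : Continuous (evalAM x) := by
  have h1 : Continuous fun f : BoundedContinuousFunction (Set.Ici (0:ℝ)) ℝ => f x :=
    continuous_eval_const x
  exact h1.comp (ZeroAtInftyContinuousMap.isometry_toBCF (α := Set.Ici (0:ℝ)) (β := ℝ)).continuous

@[simp] lemma evalAM_apply (x : Set.Ici (0:ℝ)) (f : C₀(Set.Ici (0:ℝ), ℝ)) :
    evalAM x f = f x := rfl

lemma expMon_step (a c : ℝ) (ha : 0 < a) (hc : a ≤ c)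
    (V : Submodule ℝ C₀(Set.Ici (0:ℝ), ℝ)) (hV : IsClosed (V : Set C₀(Set.Ici (0:ℝ), ℝ)))
    (hmem : ∀ m : ℕ, expMon c (ha.trans_le hc) m ∈ V) (m : ℕ) (h2 : 0 < c + a/2) :
    expMon (c + a/2) h2 m ∈ V := by
  have hc0 : 0 < c := ha.trans_le hc
  set b : ℝ := a / 2 with hbdef
  have hb0 : 0 < b := by positivity
  have hcb : 0 < c + b := by linarith
  set K : ℝ := c * Real.exp 1 with hKdef
  have hK : 0 < K := by positivity
  set T : ℕ → C₀(Set.Ici (0:ℝ), ℝ) :=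
    fun j => ((-b) ^ j / j.factorial) • expMon c hc0 (m + j) with hTdef
  -- norm bound
  have hnorm : ∀ j : ℕ, ‖T j‖ ≤
      (Real.exp m / K ^ m) * (((m + j : ℕ) : ℝ) ^ m * (1/2) ^ j) := by
    intro j
    have hF : (0:ℝ) < j.factorial := by exact_mod_cast j.factorial_pos
    have hscal : ‖((-b) ^ j / (j.factorial : ℝ))‖ = b ^ j / j.factorial := by
      rw [norm_div, norm_pow, norm_neg, Real.norm_eq_abs, Real.norm_eq_abs,
        abs_of_pos hb0, abs_of_pos hF]
    have h1 : ‖T j‖ ≤ b ^ j / j.factorial * (((m + j : ℕ) : ℝ) / K) ^ (m + j) := by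
      show ‖((-b) ^ j / (j.factorial : ℝ)) • expMon c hc0 (m + j)‖ ≤ _
      rw [norm_smul ((-b) ^ j / (j.factorial : ℝ)) (expMon c hc0 (m + j)), hscal]
      exact mul_le_mul_of_nonneg_left (norm_expMon_le c hc0 (m + j)) (by positivity)
    refine h1.trans ?_
    set J : ℝ := ((m + j : ℕ) : ℝ) with hJdef
    have hJ0 : (0:ℝ) ≤ J := by positivity
    have hMJ : J ^ j ≤ (j:ℝ) ^ j * Real.exp m := by
      rcases Nat.eq_zero_or_pos j with hj | hj
      · subst hj; simpa using Real.one_le_exp (by positivity : (0:ℝ) ≤ (m:ℝ))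
      · have hj' : (0:ℝ) < j := by exact_mod_cast hj
        have e1 : J ≤ (j:ℝ) * Real.exp ((m:ℝ)/j) := by
          have := Real.add_one_le_exp ((m:ℝ)/j)
          have : (m:ℝ)/j + 1 ≤ Real.exp ((m:ℝ)/j) := by linarith
          calc J = (j:ℝ) * ((m:ℝ)/j + 1) := by rw [hJdef]; push_cast; field_simp
          _ ≤ (j:ℝ) * Real.exp ((m:ℝ)/j) := by nlinarith
        calc J ^ j ≤ ((j:ℝ) * Real.exp ((m:ℝ)/j)) ^ j := pow_le_pow_left₀ hJ0 e1 j
        _ = (j:ℝ)^j * Real.exp m := by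
            rw [mul_pow, ← Real.exp_nat_mul]
            congr 2
            field_simp
    have hJJ : (j:ℝ) ^ j ≤ Real.exp j * j.factorial := pow_self_le_exp_mul_factorial j
    rw [div_pow J K (m + j), div_mul_div_comm (b ^ j) ((j.factorial : ℝ)) (J ^ (m + j)) (K ^ (m + j)),
      div_le_iff₀ (by positivity)]
    calc b ^ j * J ^ (m + j) = J ^ m * (J ^ j * b ^ j) := by rw [pow_add]; ring
    _ ≤ J ^ m * (((j:ℝ) ^ j * Real.exp m) * b ^ j) := by
        have := mul_le_mul_of_nonneg_right hMJ (by positivity : (0:ℝ) ≤ b ^ j)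
        exact mul_le_mul_of_nonneg_left this (by positivity)
    _ ≤ J ^ m * (((Real.exp j * j.factorial) * Real.exp m) * b ^ j) := by
        have h2 := mul_le_mul_of_nonneg_right
          (mul_le_mul_of_nonneg_right hJJ (Real.exp_pos (m:ℝ)).le)
          (by positivity : (0:ℝ) ≤ b ^ j)
        exact mul_le_mul_of_nonneg_left h2 (by positivity)
    _ = Real.exp m * J ^ m * j.factorial * (b * Real.exp 1) ^ j := by
        rw [mul_pow b (Real.exp 1) j, ← Real.exp_nat_mul, mul_one]
        ring
    _ ≤ Real.exp m * J ^ m * j.factorial * ((1/2) * K) ^ j := by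
        have hbe : b * Real.exp 1 ≤ (1/2) * K := by
          rw [hKdef]
          nlinarith [Real.exp_pos 1]
        have : (b * Real.exp 1) ^ j ≤ ((1/2) * K) ^ j :=
          pow_le_pow_left₀ (by positivity) hbe j
        exact mul_le_mul_of_nonneg_left this (by positivity)
    _ = Real.exp m / K ^ m * (J ^ m * (1/2) ^ j) * ((j.factorial : ℝ) * K ^ (m + j)) := by
        rw [mul_pow (1/2 : ℝ) K j, pow_add]
        field_simp
  -- summability
  have hgeo : Summable (fun n : ℕ => (n:ℝ) ^ m * (1/2 : ℝ) ^ n) :=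
    summable_pow_mul_geometric_of_norm_lt_one m (by norm_num)
  have hshift : Summable (fun j : ℕ => ((m + j : ℕ) : ℝ) ^ m * (1/2 : ℝ) ^ (m + j)) :=
    hgeo.comp_injective (fun x y h => by omega)
  have hhalf : (2:ℝ) ^ m * (1/2 : ℝ) ^ m = 1 := by
    rw [← mul_pow]; norm_num
  have hsumR : Summable (fun j : ℕ => (Real.exp m / K ^ m) *
      (((m + j : ℕ) : ℝ) ^ m * (1/2) ^ j)) := by
    refine Summable.mul_left _ ?_
    refine ((hshift.mul_left ((2:ℝ) ^ m)).congr fun j => ?_)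
    rw [pow_add]
    calc (2:ℝ)^m * (((m + j : ℕ) : ℝ) ^ m * ((1/2:ℝ)^m * (1/2:ℝ)^j))
        = ((2:ℝ)^m * (1/2:ℝ)^m) * (((m + j : ℕ) : ℝ) ^ m * (1/2:ℝ)^j) := by ring
    _ = ((m + j : ℕ) : ℝ) ^ m * (1/2:ℝ)^j := by rw [hhalf, one_mul]
  have hsumN : Summable (fun j => ‖T j‖) :=
    Summable.of_nonneg_of_le (fun j => norm_nonneg _) hnorm hsumR
  have hS : Summable T := hsumN.of_norm
  have hg : HasSum T (∑' j, T j) := hS.hasSum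
  -- pointwise identification
  have hpt : ∀ x : Set.Ici (0:ℝ),
      HasSum (fun j => T j x) (expMon (c + b) hcb m x) := by
    intro x
    have hx0 : (0:ℝ) ≤ (x:ℝ) := x.2
    have hexp : HasSum (fun j : ℕ => (-(b * (x:ℝ))) ^ j / j.factorial)
        (Real.exp (-(b * (x:ℝ)))) := by
      rw [Real.exp_eq_exp_ℝ]
      exact NormedSpace.expSeries_div_hasSum_exp _
    have h3 := hexp.mul_left (Real.exp (-(c * (x:ℝ))) * (x:ℝ) ^ m)
    have hfun : (fun j : ℕ => (Real.exp (-(c * (x:ℝ))) * (x:ℝ) ^ m) *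
        ((-(b * (x:ℝ))) ^ j / j.factorial)) = fun j => T j x := by
      funext j
      have : T j x = ((-b) ^ j / j.factorial) * (Real.exp (-(c * (x:ℝ))) * (x:ℝ) ^ (m + j)) := by
        simp [hTdef]
      rw [this, pow_add, ← neg_mul b (x:ℝ), mul_pow (-b) ((x:ℝ)) j]
      ring
    have hval : (Real.exp (-(c * (x:ℝ))) * (x:ℝ) ^ m) * Real.exp (-(b * (x:ℝ)))
        = expMon (c + b) hcb m x := by
      rw [expMon_apply, show -((c+b)*(x:ℝ)) = -(c*(x:ℝ)) + -(b*(x:ℝ)) by ring, Real.exp_add]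
      ring
    rw [hfun, hval] at h3
    exact h3
  have heq : (∑' j, T j) = expMon (c + b) hcb m := by
    ext x
    have h1 : HasSum (fun j => T j x) ((∑' j, T j) x) := by
      have h2 := hg.map (evalAM x) (continuous_evalAM x)
      simpa [Function.comp_def] using h2
    exact h1.unique (hpt x)
  have hpartial : ∀ s : Finset ℕ, (∑ j ∈ s, T j) ∈ V := fun s =>
    Submodule.sum_mem V fun j _ => Submodule.smul_mem V _ (hmem (m + j))
  have hmemV : (∑' j, T j) ∈ V :=
    hV.mem_of_tendsto hg (Filter.Eventually.of_forall hpartial)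
  rw [heq] at hmemV
  exact hmemV



noncomputable def gAux (q : ℝ) (hq0 : 0 < q) (hq1 : q < 1) (f : C₀(Set.Ici (0:ℝ), ℝ))
    (t : Set.Icc (0:ℝ) 1) : ℝ :=
  if _h : (t : ℝ) = 0 then 0 else
    f ⟨Real.log t / Real.log q,
      div_nonneg_of_nonpos (Real.log_nonpos t.2.1 t.2.2) (Real.log_neg hq0 hq1).le⟩

lemma gAux_apply_ne (q : ℝ) (hq0 : 0 < q) (hq1 : q < 1) (f : C₀(Set.Ici (0:ℝ), ℝ))
    (t : Set.Icc (0:ℝ) 1) (h : (t : ℝ) ≠ 0) (hmem : Real.log t / Real.log q ∈ Set.Ici (0:ℝ)) :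
    gAux q hq0 hq1 f t = f ⟨Real.log t / Real.log q, hmem⟩ := dif_neg h

lemma continuous_gAux (q : ℝ) (hq0 : 0 < q) (hq1 : q < 1) (f : C₀(Set.Ici (0:ℝ), ℝ)) :
    Continuous (gAux q hq0 hq1 f) := by
  have hlq : Real.log q < 0 := Real.log_neg hq0 hq1
  rw [continuous_iff_continuousAt]
  intro t
  by_cases ht : (t : ℝ) = 0
  · have htv : gAux q hq0 hq1 f t = 0 := dif_pos ht
    rw [ContinuousAt, htv, Metric.tendsto_nhds]
    intro ε hε
    have hzero : Tendsto f atTop (𝓝 0) := by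
      have h0 := f.zero_at_infty'
      rwa [ici_cocompact_eq_atTop] at h0
    obtain ⟨M, hM⟩ := (Filter.eventually_atTop).1 ((Metric.tendsto_nhds.1 hzero) ε hε)
    set δ := q ^ (M : ℝ) with hδdef
    have hδ0 : 0 < δ := Real.rpow_pos_of_pos hq0 _
    have hnb : {s : Set.Icc (0:ℝ) 1 | (s : ℝ) < δ} ∈ 𝓝 t := by
      have hop : IsOpen {s : Set.Icc (0:ℝ) 1 | (s : ℝ) < δ} :=
        isOpen_Iio.preimage continuous_subtype_val
      exact hop.mem_nhds (by simp only [Set.mem_setOf_eq, ht]; exact hδ0)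
    filter_upwards [hnb] with s hs
    rcases eq_or_ne (s : ℝ) 0 with h0 | h0
    · have : gAux q hq0 hq1 f s = 0 := dif_pos h0
      rw [this]
      simpa using hε
    · have hs0 : 0 < (s : ℝ) := lt_of_le_of_ne s.2.1 (Ne.symm h0)
      have hmem : Real.log s / Real.log q ∈ Set.Ici (0:ℝ) :=
        div_nonneg_of_nonpos (Real.log_nonpos s.2.1 s.2.2) hlq.le
      rw [gAux_apply_ne q hq0 hq1 f s h0 hmem]
      have hlog : Real.log s < Real.log δ := Real.log_lt_log hs0 hs
      rw [hδdef, Real.log_rpow hq0] at hlog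
      have hMle : (M : ℝ) ≤ Real.log s / Real.log q := by
        rw [le_div_iff_of_neg hlq]
        nlinarith
      exact hM ⟨Real.log s / Real.log q, hmem⟩ (Subtype.coe_le_coe.1 (by exact hMle))
  · have hinner : ContinuousAt (fun s : Set.Icc (0:ℝ) 1 => Real.log s / Real.log q) t :=
      ((Real.continuousAt_log ht).comp continuous_subtype_val.continuousAt).div_const _
    have hF0 : ContinuousAt (fun s : Set.Icc (0:ℝ) 1 =>
        f ⟨Real.log s / Real.log q,
          div_nonneg_of_nonpos (Real.log_nonpos s.2.1 s.2.2)
            (Real.log_neg hq0 hq1).le⟩) t :=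
      f.continuous.continuousAt.comp (tendsto_subtype_rng.2 hinner)
    refine hF0.congr ?_
    have hnb : {s : Set.Icc (0:ℝ) 1 | (s : ℝ) ≠ 0} ∈ 𝓝 t :=
      (isOpen_compl_singleton.preimage continuous_subtype_val).mem_nhds ht
    filter_upwards [hnb] with s hs
    exact (gAux_apply_ne q hq0 hq1 f s hs _).symm

lemma gAux_apply_zero (q : ℝ) (hq0 : 0 < q) (hq1 : q < 1) (f : C₀(Set.Ici (0:ℝ), ℝ))
    (t : Set.Icc (0:ℝ) 1) (h : (t : ℝ) = 0) : gAux q hq0 hq1 f t = 0 := dif_pos h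


/-- For fixed `0 < q < 1`, the span of the functions `x ↦ q^x x^m`, `m ∈ ℤ₊`,
is dense in `C₀([0,∞))`. -/
theorem span_qpow_monomials_dense (q : ℝ) (hq0 : 0 < q) (hq1 : q < 1) :
    Dense (↑(Submodule.span ℝ
      {f : C₀(Set.Ici (0 : ℝ), ℝ) | ∃ m : ℕ, ∀ x : Set.Ici (0 : ℝ),
        f x = q ^ (x : ℝ) * (x : ℝ) ^ m}) : Set (C₀(Set.Ici (0 : ℝ), ℝ))) := by
  have hlq : Real.log q < 0 := Real.log_neg hq0 hq1
  set a : ℝ := -Real.log q with hadef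
  have ha : 0 < a := by rw [hadef]; linarith
  set V := (Submodule.span ℝ
      {f : C₀(Set.Ici (0 : ℝ), ℝ) | ∃ m : ℕ, ∀ x : Set.Ici (0 : ℝ),
        f x = q ^ (x : ℝ) * (x : ℝ) ^ m}).topologicalClosure with hVdef
  have hVc : IsClosed (V : Set C₀(Set.Ici (0:ℝ), ℝ)) :=
    Submodule.isClosed_topologicalClosure _
  have hrpow : ∀ x : Set.Ici (0:ℝ), q ^ (x : ℝ) = Real.exp (-(a * (x:ℝ))) := fun x => by
    rw [Real.rpow_def_of_pos hq0]
    congr 1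
    rw [hadef]; ring
  have hbase : ∀ m : ℕ, expMon a ha m ∈ V := fun m => by
    apply Submodule.le_topologicalClosure
    apply Submodule.subset_span
    exact ⟨m, fun x => by rw [expMon_apply, hrpow]⟩
  have hgen : ∀ k : ℕ, ∀ m : ℕ, ∀ h : 0 < a + k * (a/2), expMon (a + k * (a/2)) h m ∈ V := by
    intro k
    induction k with
    | zero =>
      intro m h
      convert hbase m using 2
      push_cast; ring
    | succ k ih =>
      intro m h
      have hk : (0:ℝ) ≤ k := Nat.cast_nonneg k
      have hle : a ≤ a + k * (a/2) := by nlinarith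
      have h0 : 0 < a + k * (a/2) := by nlinarith
      have h2 : 0 < (a + k * (a/2)) + a/2 := by nlinarith
      have := expMon_step a (a + k * (a/2)) ha hle V hVc (fun m' => ih m' h0) m h2
      convert this using 2
      push_cast; ring
  have hpow : ∀ n : ℕ, ∀ h : 0 < ((n:ℝ)+1) * a, expMon (((n:ℝ)+1) * a) h 0 ∈ V := by
    intro n h
    have hk : (0:ℝ) ≤ (2*n : ℕ) := Nat.cast_nonneg _
    have h3 : 0 < a + (2*n : ℕ) * (a/2) := by positivity
    have := hgen (2*n) 0 h3
    convert this using 2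
    push_cast; ring
  suffices hVtop : V = ⊤ by
    rw [dense_iff_closure_eq, ← Submodule.topologicalClosure_coe, ← hVdef, hVtop,
      Submodule.top_coe]
  rw [Submodule.eq_top_iff']
  intro f
  have hmemc : f ∈ closure (V : Set C₀(Set.Ici (0:ℝ), ℝ)) := by
    rw [Metric.mem_closure_iff]
    intro ε hε
    set g : C(Set.Icc (0:ℝ) 1, ℝ) := ⟨gAux q hq0 hq1 f, continuous_gAux q hq0 hq1 f⟩ with hgdef
    have hgclosure : g ∈ closure
        ((polynomialFunctions (Set.Icc (0:ℝ) 1) : Subalgebra ℝ C(Set.Icc (0:ℝ) 1, ℝ)) :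
          Set C(Set.Icc (0:ℝ) 1, ℝ)) := by
      rw [← Subalgebra.topologicalClosure_coe, polynomialFunctions.topologicalClosure]
      trivial
    obtain ⟨P, hPmem, hPdist⟩ := Metric.mem_closure_iff.1 hgclosure (ε/2) (by positivity)
    rw [polynomialFunctions_coe] at hPmem
    obtain ⟨p, rfl⟩ := hPmem
    set d := p.natDegree with hddef
    have hposn : ∀ n : ℕ, (0:ℝ) < ((n:ℝ)+1) * a := fun n => by positivity
    set F : C₀(Set.Ici (0:ℝ), ℝ) :=
      ∑ n ∈ Finset.range d, p.coeff (n+1) • expMon (((n:ℝ)+1) * a) (hposn n) 0 with hFdef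
    have hFV : F ∈ V := Submodule.sum_mem V fun n _ => Submodule.smul_mem V _ (hpow n (hposn n))
    refine ⟨F, hFV, ?_⟩
    rw [dist_eq_norm]
    set t0 : Set.Icc (0:ℝ) 1 := ⟨0, le_rfl, by norm_num⟩ with ht0def
    have hg0 : g t0 = 0 := gAux_apply_zero q hq0 hq1 f t0 rfl
    have hP0 : (Polynomial.toContinuousMapOnAlgHom (Set.Icc (0:ℝ) 1) p) t0 = p.coeff 0 := by
      simp [Polynomial.coeff_zero_eq_eval_zero]; rfl
    have hc0 : |p.coeff 0| < ε/2 := by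
      have h1 : dist (g t0) ((Polynomial.toContinuousMapOnAlgHom (Set.Icc (0:ℝ) 1) p) t0)
          ≤ dist g (Polynomial.toContinuousMapOnAlgHom (Set.Icc (0:ℝ) 1) p) :=
        ContinuousMap.dist_apply_le_dist t0
      rw [hg0, hP0] at h1
      calc |p.coeff 0| = dist (0:ℝ) (p.coeff 0) := by rw [Real.dist_eq]; rw [abs_sub_comm]; simp
      _ ≤ dist g (Polynomial.toContinuousMapOnAlgHom (Set.Icc (0:ℝ) 1) p) := h1
      _ < ε/2 := hPdist
    have hpt : ∀ x : Set.Ici (0:ℝ), ‖(f - F) x‖ ≤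
        dist g (Polynomial.toContinuousMapOnAlgHom (Set.Icc (0:ℝ) 1) p) + ε/2 := by
      intro x
      set t : ℝ := q ^ (x : ℝ) with htdef
      have ht0 : 0 < t := Real.rpow_pos_of_pos hq0 _
      have ht1 : t ≤ 1 := Real.rpow_le_one hq0.le hq1.le x.2
      set ts : Set.Icc (0:ℝ) 1 := ⟨t, ht0.le, ht1⟩ with htsdef
      have hlogt : Real.log t / Real.log q = (x:ℝ) := by
        rw [htdef, Real.log_rpow hq0, mul_div_assoc, div_self hlq.ne, mul_one]
      have hmemlog : Real.log t / Real.log q ∈ Set.Ici (0:ℝ) := by rw [hlogt]; exact x.2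
      have hgval : g ts = f x := by
        rw [hgdef]
        show gAux q hq0 hq1 f ts = f x
        rw [gAux_apply_ne q hq0 hq1 f ts ht0.ne' hmemlog]
        congr 1
        exact Subtype.ext hlogt
      have hexpval : ∀ n : ℕ, expMon (((n:ℝ)+1) * a) (hposn n) 0 x = t ^ (n+1) := by
        intro n
        rw [expMon_apply, pow_zero, mul_one, htdef, hrpow, ← Real.exp_nat_mul]
        congr 1
        push_cast
        ring
      have hFval : F x = Polynomial.eval t p - p.coeff 0 := by
        have h1 : F x = ∑ n ∈ Finset.range d, p.coeff (n+1) * t ^ (n+1) := by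
          have h2 : evalAM x F = ∑ n ∈ Finset.range d,
              evalAM x (p.coeff (n+1) • expMon (((n:ℝ)+1) * a) (hposn n) 0) :=
            map_sum (evalAM x) _ _
          simp only [evalAM_apply] at h2
          rw [h2]
          refine Finset.sum_congr rfl fun n _ => ?_
          have : (p.coeff (n+1) • expMon (((n:ℝ)+1) * a) (hposn n) 0) x
              = p.coeff (n+1) * (expMon (((n:ℝ)+1) * a) (hposn n) 0 x) := rfl
          rw [this, hexpval n]
        have h3 : Polynomial.eval t p = ∑ n ∈ Finset.range (d+1), p.coeff n * t ^ n := by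
          rw [hddef]
          exact Polynomial.eval_eq_sum_range t
        rw [h1, h3, Finset.sum_range_succ']
        simp
      have hPts : (Polynomial.toContinuousMapOnAlgHom (Set.Icc (0:ℝ) 1) p) ts
          = Polynomial.eval t p := by simp; rfl
      have hsub : (f - F) x = (g ts - (Polynomial.toContinuousMapOnAlgHom (Set.Icc (0:ℝ) 1) p) ts)
          + p.coeff 0 := by
        rw [ZeroAtInftyContinuousMap.coe_sub]
        simp only [Pi.sub_apply]
        rw [hgval, hFval, hPts]
        ring
      rw [hsub]
      calc ‖(g ts - (Polynomial.toContinuousMapOnAlgHom (Set.Icc (0:ℝ) 1) p) ts) + p.coeff 0‖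
          ≤ ‖g ts - (Polynomial.toContinuousMapOnAlgHom (Set.Icc (0:ℝ) 1) p) ts‖ + ‖p.coeff 0‖ :=
            norm_add_le _ _
      _ ≤ dist g (Polynomial.toContinuousMapOnAlgHom (Set.Icc (0:ℝ) 1) p) + ε/2 := by
          have h5 : ‖g ts - (Polynomial.toContinuousMapOnAlgHom (Set.Icc (0:ℝ) 1) p) ts‖
              = dist (g ts) ((Polynomial.toContinuousMapOnAlgHom (Set.Icc (0:ℝ) 1) p) ts) :=
            (dist_eq_norm _ _).symm
          rw [h5]
          have h6 := ContinuousMap.dist_apply_le_dist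
            (f := g) (g := Polynomial.toContinuousMapOnAlgHom (Set.Icc (0:ℝ) 1) p) ts
          have h7 : ‖p.coeff 0‖ ≤ ε/2 := by
            rw [Real.norm_eq_abs]; exact hc0.le
          linarith
    have hnorm : ‖f - F‖ ≤ dist g (Polynomial.toContinuousMapOnAlgHom (Set.Icc (0:ℝ) 1) p)
        + ε/2 := by
      rw [← ZeroAtInftyContinuousMap.norm_toBCF_eq_norm]
      refine (BoundedContinuousFunction.norm_le (by positivity)).2 fun x => ?_
      exact hpt x
    calc ‖f - F‖ ≤ dist g (Polynomial.toContinuousMapOnAlgHom (Set.Icc (0:ℝ) 1) p) + ε/2 := hnorm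
    _ < ε/2 + ε/2 := by
        have := hPdist
        linarith [hPdist]
    _ = ε := by ring
  rwa [hVc.closure_eq] at hmemc
end
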